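/- Semi-discrete energy conservation for the pairing-matrix (Petrov–Galerkin) scheme: let K₁ and \tilde K₁ be invertible, M_d and M_b symmetric positive definite, all time-independent, and suppose differentiable curves d, b, e, h satisfy d'(t) = \tilde D h(t), b'(t) = −D e(t), K₁ e(t) = M_d d(t), \tilde K₁ h(t) = M_b b(t), together with the algebraic identity eᵀ \tilde K₂ \tilde D h = hᵀ K₂ D e for all vectors (discrete integration by parts), where \tilde K₂ = K₁ᵀ and K₂ = \tilde K₁ᵀ. Then the energy ½(dᵀ M_d d + bᵀ M_b b) is constant in time. -/

import Mathlib

open Matrix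

lemma quad_hasDerivAt {k : ℕ} (M : Matrix (Fin k) (Fin k) ℝ) (hM : Mᵀ = M)
    (d : ℝ → Fin k → ℝ) (hd : Differentiable ℝ d) (t : ℝ) :
    HasDerivAt (fun t => d t ⬝ᵥ (M *ᵥ d t)) (2 * (deriv d t ⬝ᵥ (M *ᵥ d t))) t := by
  have hdi : ∀ i, HasDerivAt (fun t => d t i) (deriv d t i) t := fun i =>
    (hasDerivAt_pi.mp (hd t).hasDerivAt) i
  have key : HasDerivAt (fun t => d t ⬝ᵥ (M *ᵥ d t))
      (deriv d t ⬝ᵥ (M *ᵥ d t) + d t ⬝ᵥ (M *ᵥ deriv d t)) t := by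
    have : ∀ u : ℝ, d u ⬝ᵥ (M *ᵥ d u) = ∑ i, ∑ j, d u i * (M i j * d u j) := by
      intro u
      simp [dotProduct, mulVec, Finset.mul_sum]
    simp only [this]
    have hsum : HasDerivAt (fun u => ∑ i, ∑ j, d u i * (M i j * d u j))
        (∑ i, ∑ j, (deriv d t i * (M i j * d t j) + d t i * (M i j * deriv d t j))) t := by
      apply HasDerivAt.fun_sum; intro i _
      apply HasDerivAt.fun_sum; intro j _
      exact (hdi i).mul ((hdi j).const_mul (M i j))
    convert hsum using 1
    simp [dotProduct, mulVec, Finset.mul_sum, Finset.sum_add_distrib, Finset.sum_mul,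
      mul_comm, mul_assoc, mul_left_comm]
  have heq : d t ⬝ᵥ (M *ᵥ deriv d t) = deriv d t ⬝ᵥ (M *ᵥ d t) := by
    conv_lhs => rw [← hM, mulVec_transpose, dotProduct_comm, ← dotProduct_mulVec]
  rw [heq, ← two_mul] at key
  exact key

/-- Semi-discrete energy conservation for the pairing-matrix (Petrov–Galerkin)
scheme: if `K₁`, `K̃₁` are invertible, `M_d`, `M_b` symmetric positive definite,
the curves satisfy `d' = D̃ h`, `b' = −D e`, `K₁ e = M_d d`, `K̃₁ h = M_b b`, and
the discrete integration-by-parts identity `xᵀ K̃₂ D̃ y = yᵀ K₂ D x` holds for all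
vectors, where `K̃₂ = K₁ᵀ` and `K₂ = K̃₁ᵀ`, then `½(dᵀ M_d d + bᵀ M_b b)` is
constant in time. -/
theorem energy_conservation_pairing_scheme {n m : ℕ}
    (K₁ Md : Matrix (Fin n) (Fin n) ℝ) (K₁t Mb : Matrix (Fin m) (Fin m) ℝ)
    (Dt : Matrix (Fin n) (Fin m) ℝ) (D : Matrix (Fin m) (Fin n) ℝ)
    (hK₁ : IsUnit K₁.det) (hK₁t : IsUnit K₁t.det)
    (hMd : Md.PosDef) (hMb : Mb.PosDef)
    (hibp : ∀ (x : Fin n → ℝ) (y : Fin m → ℝ),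
      x ⬝ᵥ (K₁ᵀ *ᵥ (Dt *ᵥ y)) = y ⬝ᵥ (K₁tᵀ *ᵥ (D *ᵥ x)))
    (d e : ℝ → Fin n → ℝ) (b h : ℝ → Fin m → ℝ)
    (hd : Differentiable ℝ d) (hb : Differentiable ℝ b)
    (h1 : ∀ t, deriv d t = Dt *ᵥ h t)
    (h2 : ∀ t, deriv b t = -(D *ᵥ e t))
    (h3 : ∀ t, K₁ *ᵥ e t = Md *ᵥ d t)
    (h4 : ∀ t, K₁t *ᵥ h t = Mb *ᵥ b t) :
    ∀ t s : ℝ,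
      (1 / 2 : ℝ) * (d t ⬝ᵥ (Md *ᵥ d t) + b t ⬝ᵥ (Mb *ᵥ b t)) =
      (1 / 2 : ℝ) * (d s ⬝ᵥ (Md *ᵥ d s) + b s ⬝ᵥ (Mb *ᵥ b s)) := by
  have hMds : Mdᵀ = Md := by
    rw [← conjTranspose_eq_transpose_of_trivial]; exact hMd.isHermitian.eq
  have hMbs : Mbᵀ = Mb := by
    rw [← conjTranspose_eq_transpose_of_trivial]; exact hMb.isHermitian.eq
  set E : ℝ → ℝ := fun t => (1 / 2 : ℝ) * (d t ⬝ᵥ (Md *ᵥ d t) + b t ⬝ᵥ (Mb *ᵥ b t)) with hE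
  have hDE : ∀ t, HasDerivAt E 0 t := by
    intro t
    have hq := ((quad_hasDerivAt Md hMds d hd t).add (quad_hasDerivAt Mb hMbs b hb t)).const_mul
      ((1 : ℝ) / 2)
    have e1 : e t ⬝ᵥ (K₁ᵀ *ᵥ (Dt *ᵥ h t)) = deriv d t ⬝ᵥ (Md *ᵥ d t) := by
      rw [dotProduct_mulVec, vecMul_transpose, h3, h1, dotProduct_comm]
    have e2 : h t ⬝ᵥ (K₁tᵀ *ᵥ (D *ᵥ e t)) = (D *ᵥ e t) ⬝ᵥ (Mb *ᵥ b t) := by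
      rw [dotProduct_mulVec, vecMul_transpose, h4, dotProduct_comm]
    have e3 : deriv b t ⬝ᵥ (Mb *ᵥ b t) = -((D *ᵥ e t) ⬝ᵥ (Mb *ᵥ b t)) := by
      rw [h2, neg_dotProduct]
    have hz : (1 : ℝ) / 2 * (2 * (deriv d t ⬝ᵥ (Md *ᵥ d t)) + 2 * (deriv b t ⬝ᵥ (Mb *ᵥ b t)))
        = 0 := by
      have := hibp (e t) (h t)
      rw [e1, e2] at this
      rw [e3, ← this]
      ring
    rw [hz] at hq
    exact hq
  have hdiff : Differentiable ℝ E := fun t => (hDE t).differentiableAt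
  intro t s
  exact is_const_of_deriv_eq_zero hdiff (fun x => (hDE x).deriv) t s
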